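/- arXiv:2307.12806 — 3 statements merged into one kernel-verified Lean document; each statement's English description precedes it below -/
import Mathlib

section
/- Assume (H1)–(H3). Let (ν,α,ω,x) be an auxiliary process, and define the ℝᵐ-valued measure μ(dt) := ω(t) ν(dt) / (1 + Σ_{i=1}^n |Σ_{j=1}^m g_{ij}(t,α(t)) ω^j(t)|). Then μ(B) ∈ 𝒦 for every Borel B ⊆ [0,T], μ ≪ ν, the function t ↦ G(t,α(t)) is μ-integrable with ∫_B G(t,α(t)) μ(dt) = ∫_B 𝔤(t,α(t),ω(t)) ν(dt) for every Borel B, so that (μ,α,x) is an impulsive process; and if ν is absolutely continuous w.r.t. Lebesgue measure then so is μ. -/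
open MeasureTheory Set Filter Topology

noncomputable section

/-- ℝⁿ with the Euclidean norm. -/
abbrev Ev (n : ℕ) := EuclideanSpace ℝ (Fin n)

/-- `(ℝⁿ)^{N+1}` with the Euclidean norm: the space of histories `{x(t-h_k)}`. -/
abbrev Hist (n N : ℕ) := PiLp 2 (fun _ : Fin (N + 1) => Ev n)

/-- The Lebesgue σ-algebra on ℝ (Carathéodory sets of the Lebesgue outer measure). -/
def LebSA : MeasurableSpace ℝ := (volume : Measure ℝ).toOuterMeasure.caratheodory

/-- The Lebesgue × Borel product σ-algebra on ℝ × ℝ^q. -/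
def LBprod (q : ℕ) : MeasurableSpace (ℝ × (Fin q → ℝ)) := LebSA.prod inferInstance

/-- The history `{x(t-h_k)} = (x(t-h₀),…,x(t-h_N))`. -/
def histOf {n N : ℕ} (hdel : Fin (N + 1) → ℝ) (x : ℝ → Ev n) (t : ℝ) : Hist n N :=
  WithLp.toLp 2 (fun k => x (t - hdel k))

/-- Total-variation measure `|μ| = Σ_j (μ^j₊ + μ^j₋)` of an ℝᵐ-valued measure. -/
def tvm {m : ℕ} (μ : Fin m → SignedMeasure ℝ) : Measure ℝ := ∑ j, (μ j).totalVariation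

/-- The Radon–Nikodym derivative `ω = dμ/d|μ|`. -/
def rnd {m : ℕ} (μ : Fin m → SignedMeasure ℝ) (t : ℝ) : Fin m → ℝ :=
  fun j => SignedMeasure.rnDeriv (μ j) (tvm μ) t

/-- A matrix-valued function Ψ is μ-integrable if `t ↦ Ψ(t)·ω(t)` is `|μ|`-integrable on [0,T]. -/
def MuIntegrable (T : ℝ) {n m : ℕ} (μ : Fin m → SignedMeasure ℝ)
    (Ψ : ℝ → Matrix (Fin n) (Fin m) ℝ) : Prop :=
  IntegrableOn (fun t => ((Ψ t).mulVec (rnd μ t) : Fin n → ℝ)) (Icc 0 T) (tvm μ)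

/-- `∫_B Ψ dμ := ∫_B Ψ(t)·ω(t) |μ|(dt)`. -/
def muInt {n m : ℕ} (μ : Fin m → SignedMeasure ℝ)
    (Ψ : ℝ → Matrix (Fin n) (Fin m) ℝ) (B : Set ℝ) : Ev n :=
  (WithLp.equiv 2 (Fin n → ℝ)).symm (fun i => ∫ t in B, ((Ψ t).mulVec (rnd μ t)) i ∂(tvm μ))

/-- An impulsive control `(μ,α)`: μ is an ℝᵐ-valued measure on [0,T] with values in the
cone 𝒦, α is Borel measurable with `α(t) ∈ A(t)` Lebesgue-a.e. on [0,T] and |μ|-a.e.,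
and `t ↦ G(t,α(t))` is μ-integrable. -/
structure IsImpulsiveControl (T : ℝ) {n m q : ℕ} (K : Set (Fin m → ℝ))
    (A : ℝ → Set (Fin q → ℝ)) (G : ℝ → (Fin q → ℝ) → Matrix (Fin n) (Fin m) ℝ)
    (μ : Fin m → SignedMeasure ℝ) (α : ℝ → Fin q → ℝ) : Prop where
  supported : ∀ j B, MeasurableSet B → Disjoint B (Icc 0 T) → μ j B = 0
  cone : ∀ B, MeasurableSet B → (fun j => μ j B) ∈ K
  meas : Measurable α
  mem_ae : ∀ᵐ t ∂(volume.restrict (Icc 0 T)), α t ∈ A t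
  mem_tv : ∀ᵐ t ∂(tvm μ), α t ∈ A t
  integ : MuIntegrable T μ (fun t => G t (α t))

/-- A trajectory associated with `(μ,α)`: a bounded-variation function satisfying the
delayed impulsive integral equation on (0,T] and matching the history ζ a.e. on [−h,0). -/
structure IsTrajectory (T h : ℝ) {n m q N : ℕ} (hdel : Fin (N + 1) → ℝ)
    (f : ℝ → Hist n N → (Fin q → ℝ) → Ev n)
    (G : ℝ → (Fin q → ℝ) → Matrix (Fin n) (Fin m) ℝ)
    (ζ : ℝ → Ev n)
    (μ : Fin m → SignedMeasure ℝ) (α : ℝ → Fin q → ℝ) (x : ℝ → Ev n) : Prop where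
  bv : BoundedVariationOn x (Icc 0 T)
  init : ∀ᵐ t ∂(volume.restrict (Ico (-h) 0)), x t = ζ t
  integ : IntegrableOn (fun s => f s (histOf hdel x s) (α s)) (Icc 0 T) volume
  eq : ∀ t ∈ Ioc 0 T, x t = x 0 + (∫ s in (0:ℝ)..t, f s (histOf hdel x s) (α s))
        + muInt μ (fun s => G s (α s)) (Icc 0 t)

/-- The denominator `1 + Σ_i |Σ_j g_{ij}(t,a) w^j|`. -/
def den {n m : ℕ} (M : Matrix (Fin n) (Fin m) ℝ) (w : Fin m → ℝ) : ℝ :=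
  1 + ∑ i, |M.mulVec w i|

/-- The compactified fast dynamics `𝔤(t,a,w) = G(t,a)w / (1+Σ_i|Σ_j g_{ij}(t,a)w^j|)`. -/
def gfrak {n m q : ℕ} (G : ℝ → (Fin q → ℝ) → Matrix (Fin n) (Fin m) ℝ)
    (t : ℝ) (a : Fin q → ℝ) (w : Fin m → ℝ) : Ev n :=
  (den (G t a) w)⁻¹ • (WithLp.equiv 2 (Fin n → ℝ)).symm ((G t a).mulVec w)

/-- The compactified control map `𝔥(t,a,w) = w / (1+Σ_i|Σ_j g_{ij}(t,a)w^j|)`. -/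
def hfrak {n m q : ℕ} (G : ℝ → (Fin q → ℝ) → Matrix (Fin n) (Fin m) ℝ)
    (t : ℝ) (a : Fin q → ℝ) (w : Fin m → ℝ) : Ev m :=
  (den (G t a) w)⁻¹ • (WithLp.equiv 2 (Fin m → ℝ)).symm w

/-- `𝒦̃ = {w ∈ 𝒦 : |wʲ| ≤ 1, j = 1,…,m}`. -/
def Ktilde {m : ℕ} (K : Set (Fin m → ℝ)) : Set (Fin m → ℝ) :=
  {w ∈ K | ∀ j, |w j| ≤ 1}

/-- An auxiliary process `(ν,α,ω,x)`: ν is a finite nonnegative measure on [0,T],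
α and ω are Borel controls with values in A(t) and 𝒦̃ (Lebesgue-a.e. and ν-a.e.),
`t ↦ 𝔤(t,α(t),ω(t))` is ν-integrable, and x is a BV solution of the auxiliary
delayed integral equation with history ζ. -/
structure IsAuxProcess (T h : ℝ) {n m q N : ℕ} (hdel : Fin (N + 1) → ℝ)
    (f : ℝ → Hist n N → (Fin q → ℝ) → Ev n)
    (G : ℝ → (Fin q → ℝ) → Matrix (Fin n) (Fin m) ℝ)
    (ζ : ℝ → Ev n) (A : ℝ → Set (Fin q → ℝ)) (K : Set (Fin m → ℝ))
    (ν : Measure ℝ) (α : ℝ → Fin q → ℝ) (ω : ℝ → Fin m → ℝ) (x : ℝ → Ev n) : Prop where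
  finite : IsFiniteMeasure ν
  supported : ∀ B : Set ℝ, MeasurableSet B → Disjoint B (Icc 0 T) → ν B = 0
  αmeas : Measurable α
  ωmeas : Measurable ω
  αae : ∀ᵐ t ∂(volume.restrict (Icc 0 T)), α t ∈ A t
  αaeν : ∀ᵐ t ∂ν, α t ∈ A t
  ωae : ∀ᵐ t ∂(volume.restrict (Icc 0 T)), ω t ∈ Ktilde K
  ωaeν : ∀ᵐ t ∂ν, ω t ∈ Ktilde K
  ginteg : IntegrableOn (fun t => gfrak G t (α t) (ω t)) (Icc 0 T) ν
  bv : BoundedVariationOn x (Icc 0 T)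
  init : ∀ᵐ t ∂(volume.restrict (Ico (-h) 0)), x t = ζ t
  finteg : IntegrableOn (fun s => f s (histOf hdel x s) (α s)) (Icc 0 T) volume
  eq : ∀ t ∈ Ioc 0 T, x t = x 0 + (∫ s in (0:ℝ)..t, f s (histOf hdel x s) (α s))
        + ∫ s in Icc 0 t, gfrak G s (α s) (ω s) ∂ν

lemma withDensity_finsum' {ι : Type*} (ν : Measure ℝ)
    (s : Finset ι) (f : ι → ℝ → ENNReal) (hf : ∀ i, Measurable (f i)) :
    ν.withDensity (fun t => ∑ i ∈ s, f i t) = ∑ i ∈ s, ν.withDensity (f i) := by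
  classical
  induction s using Finset.induction_on with
  | empty => simp
  | insert a s' hnot ih =>
      simp only [Finset.sum_insert hnot]
      rw [show (fun t => f a t + ∑ i ∈ s', f i t) = f a + fun t => ∑ i ∈ s', f i t from rfl,
        withDensity_add_right _ (Finset.measurable_sum _ fun i _ => hf i), ih]

lemma totalVariation_withDensityᵥ {ν : Measure ℝ} {g : ℝ → ℝ}
    (hgm : Measurable g) (hg : Integrable g ν) :
    MeasureTheory.SignedMeasure.totalVariation (ν.withDensityᵥ g)
      = ν.withDensity (fun t => ENNReal.ofReal |g t|) := by
  haveI hP : IsFiniteMeasure (ν.withDensity fun t => ENNReal.ofReal (g t)) :=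
    isFiniteMeasure_withDensity_ofReal hg.2
  haveI hNf : IsFiniteMeasure (ν.withDensity fun t => ENNReal.ofReal (-g t)) :=
    isFiniteMeasure_withDensity_ofReal hg.neg.2
  have hms : MeasurableSet (g ⁻¹' Iic 0) := hgm measurableSet_Iic
  have hsing : (ν.withDensity fun t => ENNReal.ofReal (g t)) ⟂ₘ
      (ν.withDensity fun t => ENNReal.ofReal (-g t)) := by
    refine ⟨g ⁻¹' Iic 0, hms, ?_, ?_⟩
    · rw [withDensity_apply _ hms]
      have : ∀ t ∈ g ⁻¹' Iic 0, ENNReal.ofReal (g t) = 0 := fun t ht =>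
        ENNReal.ofReal_eq_zero.mpr ht
      rw [setLIntegral_congr_fun hms this]
      simp
    · rw [withDensity_apply _ hms.compl]
      have : ∀ t ∈ (g ⁻¹' Iic 0)ᶜ, ENNReal.ofReal (-g t) = 0 := fun t ht =>
        ENNReal.ofReal_eq_zero.mpr (by
          have := ht
          simp only [mem_compl_iff, mem_preimage, mem_Iic, not_le] at this
          simpa using this.le)
      rw [setLIntegral_congr_fun hms.compl this]
      simp
  set J : JordanDecomposition ℝ :=
    ⟨ν.withDensity fun t => ENNReal.ofReal (g t),
     ν.withDensity fun t => ENNReal.ofReal (-g t), hsing⟩ with hJ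
  have hJD : MeasureTheory.SignedMeasure.toJordanDecomposition (ν.withDensityᵥ g) = J := by
    apply SignedMeasure.toJordanDecomposition_eq
    rw [withDensityᵥ_eq_withDensity_pos_part_sub_withDensity_neg_part hg]
    rfl
  rw [SignedMeasure.totalVariation, hJD]
  show (ν.withDensity fun t => ENNReal.ofReal (g t)) +
      (ν.withDensity fun t => ENNReal.ofReal (-g t)) = _
  rw [← withDensity_add_right _ (by measurability)]
  congr 1
  funext t
  simp only [Pi.add_apply]
  rcases le_total 0 (g t) with h0 | h0
  · simp [abs_of_nonneg h0, ENNReal.ofReal_eq_zero.mpr (neg_nonpos.mpr h0)]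
  · simp [abs_of_nonpos h0, ENNReal.ofReal_eq_zero.mpr h0]

/-- **From auxiliary processes to impulsive processes** (Proposition 2.4 (ii)).
Given an auxiliary process (ν,α,ω,x), the ℝᵐ-valued measure
μ(dt) = ω(t)ν(dt)/(1+Σ_i|Σ_j g_{ij}(t,α(t))ω^j(t)|) takes values in 𝒦, is absolutely
continuous w.r.t. ν, G(·,α(·)) is μ-integrable with the two fast-dynamics integrals
coinciding on every Borel set, (μ,α,x) is an impulsive process, and if ν ≪ Lebesgue
then μ ≪ Lebesgue. -/
theorem auxiliary_process_to_impulsive_process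
    (T : ℝ) (hT : 0 < T) (n m q N : ℕ) (hN : 1 ≤ N)
    (hdel : Fin (N + 1) → ℝ) (hdel0 : hdel 0 = 0) (hmono : StrictMono hdel)
    (h : ℝ) (hh : h = hdel (Fin.last N))
    (K : Set (Fin m → ℝ)) (hKclosed : IsClosed K) (hKconvex : Convex ℝ K)
    (hKcone : ∀ w ∈ K, ∀ r : ℝ, 0 < r → r • w ∈ K)
    (A : ℝ → Set (Fin q → ℝ))
    (f : ℝ → Hist n N → (Fin q → ℝ) → Ev n)
    (G : ℝ → (Fin q → ℝ) → Matrix (Fin n) (Fin m) ℝ)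
    (ζ : ℝ → Ev n)
    (hζmeas : AEStronglyMeasurable ζ (volume.restrict (Icc (-h) 0)))
    (hζbdd : ∃ C : ℝ, ∀ᵐ t ∂(volume.restrict (Icc (-h) 0)), ‖ζ t‖ ≤ C)
    -- (H1)
    (H1 : MeasurableSet[LBprod q] {p : ℝ × (Fin q → ℝ) | p.2 ∈ A p.1})
    -- (H2)
    (H2meas : ∀ z : Hist n N, Measurable[LBprod q] (fun p : ℝ × (Fin q → ℝ) => f p.1 z p.2))
    (H2lip : ∀ M : ℝ, 0 < M → ∃ L : ℝ → ℝ, (∀ t, 0 ≤ L t) ∧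
      IntegrableOn L (Icc 0 T) volume ∧
      ∀ᵐ t ∂(volume.restrict (Icc 0 T)), ∀ z y : Hist n N, ‖z‖ ≤ M → ‖y‖ ≤ M →
        ∀ a ∈ A t, ‖f t z a - f t y a‖ ≤ L t * ‖z - y‖)
    -- (H3)
    (H3 : ∃ c : ℝ → ℝ, (∀ t, 0 ≤ c t) ∧ IntegrableOn c (Icc 0 T) volume ∧
      ∀ᵐ t ∂(volume.restrict (Icc 0 T)), ∀ z : Hist n N, ∀ a ∈ A t,
        ‖f t z a‖ ≤ c t * (1 + ‖z‖))
    -- the auxiliary process (ν,α,ω,x)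
    (ν : Measure ℝ) (α : ℝ → Fin q → ℝ) (ω : ℝ → Fin m → ℝ) (x : ℝ → Ev n)
    (haux : IsAuxProcess T h hdel f G ζ A K ν α ω x) :
    ∃ μ : Fin m → SignedMeasure ℝ,
      -- μ(dt) = ω(t) ν(dt) / (1+Σᵢ|Σⱼ g_{ij}(t,α(t)) ωʲ(t)|)
      (∀ j, ∀ B : Set ℝ, MeasurableSet B →
        μ j B = ∫ t in B, ω t j / den (G t (α t)) (ω t) ∂ν) ∧
      -- μ(B) ∈ 𝒦 for every Borel B
      (∀ B : Set ℝ, MeasurableSet B → (fun j => μ j B) ∈ K) ∧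
      -- μ ≪ ν
      (∀ B : Set ℝ, MeasurableSet B → ν B = 0 → ∀ j, μ j B = 0) ∧
      -- t ↦ G(t,α(t)) is μ-integrable and the fast-dynamics integrals coincide
      MuIntegrable T μ (fun t => G t (α t)) ∧
      (∀ B : Set ℝ, B ⊆ Icc 0 T → MeasurableSet B →
        muInt μ (fun t => G t (α t)) B = ∫ t in B, gfrak G t (α t) (ω t) ∂ν) ∧
      -- (μ,α,x) is an impulsive process
      IsImpulsiveControl T K A G μ α ∧
      IsTrajectory T h hdel f G ζ μ α x ∧
      -- if ν ≪ Lebesgue then μ ≪ Lebesgue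
      ((ν ≪ (volume : Measure ℝ)) →
        ∀ j, ∀ B : Set ℝ, MeasurableSet B → volume B = 0 → μ j B = 0) := by
  classical
  haveI := haux.finite
  -- basic positivity facts about the denominator
  set Dd : ℝ → ℝ := fun t => den (G t (α t)) (ω t) with hDd
  have hD1 : ∀ t, 1 ≤ Dd t := fun t =>
    le_add_of_nonneg_right (Finset.sum_nonneg fun i _ => abs_nonneg _)
  have hDpos : ∀ t, 0 < Dd t := fun t => lt_of_lt_of_le one_pos (hD1 t)
  set d : ℝ → ℝ := fun t => (Dd t)⁻¹ with hd
  have hdpos : ∀ t, 0 < d t := fun t => inv_pos.2 (hDpos t)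
  have hdle : ∀ t, d t ≤ 1 := fun t => inv_le_one_of_one_le₀ (hD1 t)
  have hgfrak_apply : ∀ t i, gfrak G t (α t) (ω t) i = d t * (G t (α t)).mulVec (ω t) i :=
    fun t i => rfl
  have hsum_gfrak : ∀ t, ∑ i, |gfrak G t (α t) (ω t) i| = 1 - d t := by
    intro t
    have h1 : ∀ i, |gfrak G t (α t) (ω t) i| = d t * |(G t (α t)).mulVec (ω t) i| := by
      intro i
      rw [hgfrak_apply, abs_mul, abs_of_pos (hdpos t)]
    rw [Finset.sum_congr rfl fun i _ => h1 i, ← Finset.mul_sum]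
    have h2 : ∑ i, |(G t (α t)).mulVec (ω t) i| = Dd t - 1 := by
      simp [hDd, den]
    rw [h2, mul_sub, mul_one, hd]
    have : (Dd t)⁻¹ * Dd t = 1 := inv_mul_cancel₀ (hDpos t).ne'
    rw [this]
  -- restriction of ν to [0,T] is ν itself
  have hmemae : ∀ᵐ t ∂ν, t ∈ Icc 0 T := by
    rw [ae_iff]
    exact haux.supported _ measurableSet_Icc.compl disjoint_compl_left
  have hres : ν.restrict (Icc 0 T) = ν := Measure.restrict_eq_self_of_ae_mem hmemae
  have hgint : Integrable (fun t => gfrak G t (α t) (ω t)) ν := by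
    have := haux.ginteg
    rwa [IntegrableOn, hres] at this
  -- component measurability
  have hgfi : ∀ i, AEMeasurable (fun t => gfrak G t (α t) (ω t) i) ν := by
    intro i
    exact ((EuclideanSpace.proj i).continuous.comp_aestronglyMeasurable hgint.1).aemeasurable
  have hdaem : AEMeasurable d ν := by
    have h1 : AEMeasurable (fun t => 1 - ∑ i, |gfrak G t (α t) (ω t) i|) ν :=
      aemeasurable_const.sub (Finset.aemeasurable_fun_sum _ fun i _ => measurable_abs.comp_aemeasurable (hgfi i))
    have h2 : (fun t => 1 - ∑ i, |gfrak G t (α t) (ω t) i|) = d := by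
      funext t; rw [hsum_gfrak t]; ring
    rwa [h2] at h1
  -- the densities
  set g : Fin m → ℝ → ℝ := fun j t => ω t j * d t with hgdef
  have hgaem : ∀ j, AEMeasurable (g j) ν := fun j =>
    ((measurable_pi_apply j).comp haux.ωmeas).aemeasurable.mul hdaem
  have hω1 : ∀ᵐ t ∂ν, ∀ j, |ω t j| ≤ 1 := haux.ωaeν.mono fun t ht => ht.2
  have hgbd : ∀ᵐ t ∂ν, ∀ j, |g j t| ≤ 1 := by
    filter_upwards [hω1] with t ht j
    have : |g j t| = |ω t j| * d t := by
      rw [hgdef]; rw [abs_mul, abs_of_pos (hdpos t)]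
    rw [this]
    calc |ω t j| * d t ≤ 1 * 1 :=
          mul_le_mul (ht j) (hdle t) (hdpos t).le zero_le_one
      _ = 1 := one_mul 1
  have hgi : ∀ j, Integrable (g j) ν := fun j =>
    Integrable.mono' (integrable_const 1) (hgaem j).aestronglyMeasurable
      (hgbd.mono fun t ht => by simpa [Real.norm_eq_abs] using ht j)
  -- measurable representatives
  set g' : Fin m → ℝ → ℝ := fun j => (hgaem j).mk _ with hg'def
  have hg'm : ∀ j, Measurable (g' j) := fun j => (hgaem j).measurable_mk
  have hgg' : ∀ j, g j =ᵐ[ν] g' j := fun j => (hgaem j).ae_eq_mk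
  have hall : ∀ᵐ t ∂ν, ∀ j, g j t = g' j t := ae_all_iff.mpr hgg'
  have hg'i : ∀ j, Integrable (g' j) ν := fun j => (hgi j).congr (hgg' j)
  set μ : Fin m → SignedMeasure ℝ := fun j => ν.withDensityᵥ (g' j) with hμdef
  -- the representation of μ j
  have happly : ∀ j, ∀ B : Set ℝ, MeasurableSet B →
      μ j B = ∫ t in B, ω t j / den (G t (α t)) (ω t) ∂ν := by
    intro j B hB
    rw [hμdef, withDensityᵥ_apply (hg'i j) hB]
    refine integral_congr_ae (ae_restrict_of_ae ?_)
    filter_upwards [hgg' j] with t ht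
    rw [← ht, hgdef, div_eq_mul_inv]
  -- μ vanishes on ν-null sets
  have hμnull : ∀ B : Set ℝ, MeasurableSet B → ν B = 0 → ∀ j, μ j B = 0 := by
    intro B hB hB0 j
    rw [hμdef, withDensityᵥ_apply (hg'i j) hB, Measure.restrict_eq_zero.mpr hB0,
      integral_zero_measure]
  -- 0 ∈ K
  have hK0 : (0 : Fin m → ℝ) ∈ K := by
    have hne : volume.restrict (Icc (0:ℝ) T) ≠ 0 := by
      rw [Ne, Measure.restrict_eq_zero, Real.volume_Icc]
      simp [hT]
    haveI : (ae (volume.restrict (Icc (0:ℝ) T))).NeBot := ae_neBot.mpr hne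
    obtain ⟨t0, ht0⟩ := haux.ωae.exists
    have hw : ω t0 ∈ K := ht0.1
    have htend : Tendsto (fun r : ℝ => r • ω t0) (nhdsWithin (0:ℝ) (Ioi 0)) (nhds 0) := by
      have hc : Continuous fun r : ℝ => r • ω t0 := continuous_id.smul continuous_const
      have h2 : Tendsto (fun r : ℝ => r • ω t0) (nhdsWithin (0:ℝ) (Ioi 0))
          (nhds ((0:ℝ) • ω t0)) := (hc.tendsto 0).mono_left (nhdsWithin_le_nhds (s := Ioi (0:ℝ)))
      simpa using h2
    exact hKclosed.mem_of_tendsto htend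
      (eventually_nhdsWithin_of_forall fun r hr => hKcone (ω t0) hw r hr)
  -- the vector-valued density
  set F : ℝ → Fin m → ℝ := fun t j => g j t with hFdef
  have hFsmul : F = fun t => d t • ω t := by
    funext t j
    simp [hFdef, hgdef, mul_comm]
  have hFaesm : AEStronglyMeasurable F ν := by
    rw [hFsmul]
    exact hdaem.aestronglyMeasurable.smul haux.ωmeas.aestronglyMeasurable
  have hFbd : ∀ᵐ t ∂ν, ‖F t‖ ≤ 1 := by
    filter_upwards [hgbd] with t ht
    rw [pi_norm_le_iff_of_nonneg zero_le_one]
    intro j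
    simpa [Real.norm_eq_abs] using ht j
  have hFi : Integrable F ν := Integrable.mono' (integrable_const 1) hFaesm hFbd
  have hFK : ∀ᵐ t ∂ν, F t ∈ K := by
    filter_upwards [haux.ωaeν] with t ht
    have hmem := hKcone (ω t) ht.1 (d t) (hdpos t)
    have : F t = d t • ω t := by
      funext j
      simp [hFdef, hgdef, mul_comm]
    rwa [this]
  -- cone membership
  have hconeB : ∀ B : Set ℝ, MeasurableSet B → (fun j => μ j B) ∈ K := by
    intro B hB
    have hcomp : (fun j => μ j B) = ∫ t in B, F t ∂ν := by
      funext j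
      rw [hμdef, withDensityᵥ_apply (hg'i j) hB]
      have hproj := (ContinuousLinearMap.proj (R := ℝ) (φ := fun _ : Fin m => ℝ) j
        ).integral_comp_comm (hFi.restrict (s := B))
      simp only [ContinuousLinearMap.proj_apply] at hproj
      rw [← hproj]
      refine integral_congr_ae (ae_restrict_of_ae ?_)
      filter_upwards [hgg' j] with t ht
      exact ht.symm
    rw [hcomp]
    by_cases hB0 : ν B = 0
    · rw [Measure.restrict_eq_zero.mpr hB0, integral_zero_measure]
      exact hK0
    · have havg := hKconvex.set_average_mem hKclosed hB0 (measure_ne_top ν B)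
        (ae_restrict_of_ae hFK) (hFi.restrict)
      rw [setAverage_eq] at havg
      have hc : 0 < (ν B).toReal := ENNReal.toReal_pos hB0 (measure_ne_top ν B)
      have := hKcone _ havg _ hc
      rwa [smul_smul, measureReal_def, mul_inv_cancel₀ hc.ne', one_smul] at this
  -- total variation measure
  set ρ' : ℝ → ℝ := fun t => ∑ j, |g' j t| with hρ'def
  have hρ'm : Measurable ρ' := Finset.measurable_sum _ fun j _ => (hg'm j).abs
  have hρ'0 : ∀ t, 0 ≤ ρ' t := fun t => Finset.sum_nonneg fun j _ => abs_nonneg _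
  have hρ'i : Integrable ρ' ν := integrable_finset_sum _ fun j _ => (hg'i j).abs
  set tv : Measure ℝ := ν.withDensity (fun t => ENNReal.ofReal (ρ' t)) with htvdef
  have htvm : tvm μ = tv := by
    rw [tvm]
    calc ∑ j, (μ j).totalVariation
        = ∑ j, ν.withDensity (fun t => ENNReal.ofReal |g' j t|) :=
          Finset.sum_congr rfl fun j _ => totalVariation_withDensityᵥ (hg'm j) (hg'i j)
      _ = ν.withDensity (fun t => ∑ j, ENNReal.ofReal |g' j t|) :=
          (withDensity_finsum' ν _ _ fun j => by
            exact ENNReal.measurable_ofReal.comp (hg'm j).abs).symm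
      _ = tv := by
          rw [htvdef]
          congr 1
          funext t
          rw [← ENNReal.ofReal_sum_of_nonneg fun j _ => abs_nonneg _]
  haveI htvfin : IsFiniteMeasure tv := isFiniteMeasure_withDensity_ofReal hρ'i.2
  have htvcoe : tv = ν.withDensity (fun t => ((ρ' t).toNNReal : ENNReal)) := rfl
  have hacν : tv ≪ ν := withDensity_absolutelyContinuous ν _
  -- Radon-Nikodym derivatives
  set φ : Fin m → ℝ → ℝ := fun j t => (ρ' t)⁻¹ * g' j t with hφdef
  have hφm : ∀ j, Measurable (φ j) := fun j => (hρ'm.inv).mul (hg'm j)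
  have hg'le : ∀ j t, |g' j t| ≤ ρ' t := fun j t =>
    Finset.single_le_sum (f := fun j => |g' j t|) (fun k _ => abs_nonneg _) (Finset.mem_univ j)
  have hφg : ∀ j t, ρ' t * φ j t = g' j t := by
    intro j t
    show ρ' t * ((ρ' t)⁻¹ * g' j t) = g' j t
    rcases eq_or_ne (ρ' t) 0 with h0 | h0
    · have hg0 : g' j t = 0 := by
        have := hg'le j t
        rw [h0] at this
        exact abs_eq_zero.mp (le_antisymm this (abs_nonneg _))
      simp [h0, hg0]
    · rw [← mul_assoc, mul_inv_cancel₀ h0, one_mul]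
  have hφbd : ∀ t j, |φ j t| ≤ 1 := by
    intro t j
    show |(ρ' t)⁻¹ * g' j t| ≤ 1
    rcases eq_or_ne (ρ' t) 0 with h0 | h0
    · simp [h0]
    · rw [abs_mul, abs_inv, abs_of_nonneg (hρ'0 t)]
      have := hg'le j t
      calc (ρ' t)⁻¹ * |g' j t| ≤ (ρ' t)⁻¹ * ρ' t :=
            mul_le_mul_of_nonneg_left this (inv_nonneg.mpr (hρ'0 t))
        _ = 1 := inv_mul_cancel₀ h0
  have hφi : ∀ j, Integrable (φ j) tv := fun j =>
    Integrable.mono' (integrable_const 1) (hφm j).aestronglyMeasurable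
      (ae_of_all _ fun t => by simpa [Real.norm_eq_abs] using hφbd t j)
  have hμφ : ∀ j, μ j = tv.withDensityᵥ (φ j) := by
    intro j
    have hsmul : ((fun t => (ρ' t).toNNReal) • φ j) = g' j := by
      funext t
      show (ρ' t).toNNReal • φ j t = g' j t
      rw [NNReal.smul_def, smul_eq_mul, Real.coe_toNNReal _ (hρ'0 t)]
      exact hφg j t
    rw [hμdef]
    calc ν.withDensityᵥ (g' j)
        = ν.withDensityᵥ ((fun t => (ρ' t).toNNReal) • φ j) := by rw [hsmul]
      _ = (ν.withDensity fun t => ((ρ' t).toNNReal : ENNReal)).withDensityᵥ (φ j) :=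
          withDensityᵥ_smul_eq_withDensityᵥ_withDensity
            hρ'm.real_toNNReal.aemeasurable (by rw [hsmul]; exact hg'i j)
      _ = tv.withDensityᵥ (φ j) := by rw [← htvcoe]
  have hrn : ∀ j, φ j =ᵐ[tv] fun t => rnd μ t j := by
    intro j
    have := SignedMeasure.eq_rnDeriv (μ := tv) (s := μ j) 0 (φ j) (hφi j)
      (VectorMeasure.MutuallySingular.zero_left) (by rw [zero_add, ← hμφ j])
    refine this.mono fun t ht => ?_
    rw [ht]
    show SignedMeasure.rnDeriv (μ j) tv t = rnd μ t j
    rw [rnd, htvm]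
  have hrnd_ae : ∀ᵐ t ∂tv, ∀ j, rnd μ t j = φ j t :=
    ae_all_iff.mpr fun j => (hrn j).mono fun t ht => ht.symm
  -- key pointwise identities
  have hkey : ∀ᵐ t ∂tv, ∀ i,
      ((G t (α t)).mulVec (rnd μ t)) i = (ρ' t)⁻¹ * gfrak G t (α t) (ω t) i := by
    filter_upwards [hrnd_ae, hall.filter_mono hacν.ae_le] with t h1 h2
    intro i
    have hv : rnd μ t = fun j => (ρ' t)⁻¹ * (ω t j * d t) := by
      funext j
      rw [h1 j]
      show (ρ' t)⁻¹ * g' j t = (ρ' t)⁻¹ * (ω t j * d t)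
      rw [← h2 j]
    rw [hv, hgfrak_apply t i]
    simp only [Matrix.mulVec, dotProduct, Finset.mul_sum]
    exact Finset.sum_congr rfl fun j _ => by ring
  have hzero : ∀ᵐ t ∂ν, ∀ i,
      (ρ' t).toNNReal • ((ρ' t)⁻¹ * gfrak G t (α t) (ω t) i) = gfrak G t (α t) (ω t) i := by
    filter_upwards [hall] with t h2
    intro i
    rcases eq_or_ne (ρ' t) 0 with h0 | h0
    · have hω0 : ∀ j, ω t j = 0 := by
        intro j
        have hle : |g j t| ≤ ρ' t := by rw [h2 j]; exact hg'le j t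
        rw [h0] at hle
        have : g j t = 0 := abs_eq_zero.mp (le_antisymm hle (abs_nonneg _))
        rw [hgdef] at this
        exact (mul_eq_zero.mp this).resolve_right (hdpos t).ne'
      have hgf0 : gfrak G t (α t) (ω t) i = 0 := by
        rw [hgfrak_apply]
        simp [Matrix.mulVec, dotProduct, hω0]
      simp [h0, hgf0]
    · rw [NNReal.smul_def, smul_eq_mul, Real.coe_toNNReal _ (hρ'0 t), ← mul_assoc,
        mul_inv_cancel₀ h0, one_mul]
  -- integrability of the pi-valued gfrak
  have hIg : Integrable (fun t => (fun i => gfrak G t (α t) (ω t) i : Fin n → ℝ)) ν := by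
    have := (PiLp.continuousLinearEquiv 2 ℝ (fun _ : Fin n => ℝ)
      ).toContinuousLinearMap.integrable_comp hgint
    exact this
  -- MuIntegrable
  have hmain_int : Integrable (fun t => ((G t (α t)).mulVec (rnd μ t) : Fin n → ℝ)) tv := by
    have h1 : Integrable (fun t => (fun i => (ρ' t)⁻¹ * gfrak G t (α t) (ω t) i : Fin n → ℝ))
        tv := by
      rw [htvcoe, integrable_withDensity_iff_integrable_smul₀ hρ'm.real_toNNReal.aemeasurable]
      refine hIg.congr ?_
      filter_upwards [hzero] with t ht
      funext i
      exact (ht i).symm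
    refine h1.congr ?_
    filter_upwards [hkey] with t ht
    funext i
    exact (ht i).symm
  have hMuInt : MuIntegrable T μ (fun t => G t (α t)) := by
    rw [MuIntegrable, htvm]
    exact hmain_int.integrableOn
  -- the integral identity
  have hmuint : ∀ B : Set ℝ, B ⊆ Icc 0 T → MeasurableSet B →
      muInt μ (fun t => G t (α t)) B = ∫ t in B, gfrak G t (α t) (ω t) ∂ν := by
    intro B hBsub hB
    have hcompi : ∀ i, ∫ t in B, ((G t (α t)).mulVec (rnd μ t)) i ∂(tvm μ)
        = ∫ t in B, gfrak G t (α t) (ω t) i ∂ν := by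
      intro i
      rw [htvm]
      calc ∫ t in B, ((G t (α t)).mulVec (rnd μ t)) i ∂tv
          = ∫ t in B, (ρ' t)⁻¹ * gfrak G t (α t) (ω t) i ∂tv :=
            integral_congr_ae (ae_restrict_of_ae (hkey.mono fun t ht => ht i))
        _ = ∫ t in B, (ρ' t).toNNReal • ((ρ' t)⁻¹ * gfrak G t (α t) (ω t) i) ∂ν := by
            rw [htvcoe]
            exact setIntegral_withDensity_eq_setIntegral_smul₀
              hρ'm.real_toNNReal.aemeasurable.restrict _ hB
        _ = ∫ t in B, gfrak G t (α t) (ω t) i ∂ν :=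
            integral_congr_ae (ae_restrict_of_ae (hzero.mono fun t ht => ht i))
    have hgB : Integrable (fun t => gfrak G t (α t) (ω t)) (ν.restrict B) := hgint.restrict
    have hproj : ∀ i, (∫ t in B, gfrak G t (α t) (ω t) ∂ν) i
        = ∫ t in B, gfrak G t (α t) (ω t) i ∂ν := by
      intro i
      exact ((EuclideanSpace.proj (𝕜 := ℝ) i).integral_comp_comm hgB).symm
    rw [muInt]
    refine PiLp.ext fun i => ?_
    show (∫ t in B, ((G t (α t)).mulVec (rnd μ t)) i ∂(tvm μ)) = _
    rw [hcompi i, ← hproj i]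
  -- impulsive control
  have hsupported : ∀ j B, MeasurableSet B → Disjoint B (Icc 0 T) → μ j B = 0 := by
    intro j B hB hdisj
    exact hμnull B hB (haux.supported B hB hdisj) j
  have hmem_tv : ∀ᵐ t ∂(tvm μ), α t ∈ A t := by
    rw [htvm]
    exact haux.αaeν.filter_mono hacν.ae_le
  refine ⟨μ, happly, hconeB, hμnull, hMuInt, hmuint, ?_, ?_, ?_⟩
  · exact ⟨hsupported, hconeB, haux.αmeas, haux.αae, hmem_tv, hMuInt⟩
  · refine ⟨haux.bv, haux.init, haux.finteg, ?_⟩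
    intro t ht
    rw [haux.eq t ht, hmuint (Icc 0 t) (Icc_subset_Icc_right ht.2) measurableSet_Icc]
  · intro hac j B hB hB0
    exact hμnull B hB (hac hB0) j

end
end

section
/- Let γ and γ_i (i ≥ 1) be ℝ^k-valued measures on [0,T]. If the sequence (γ_i) is uniformly bounded in total variation and there exists a Borel set ℰ ⊆ [0,T] with full Lebesgue measure and T ∈ ℰ such that lim_i ∫_{[0,t]} γ_i(ds) = ∫_{[0,t]} γ(ds) for all t ∈ ℰ, then γ_i ⇀* γ. -/
open MeasureTheory Set Filter Topology

noncomputable section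

/-- Integral of a scalar function against a signed measure
(via its Jordan decomposition). -/
def sInt (γ : SignedMeasure ℝ) (B : Set ℝ) (φ : ℝ → ℝ) : ℝ :=
  (∫ t in B, φ t ∂γ.toJordanDecomposition.posPart) -
    ∫ t in B, φ t ∂γ.toJordanDecomposition.negPart

namespace WeakStarAux

/-- Value of a signed measure via its Jordan parts. -/
lemma sm_apply (μ : SignedMeasure ℝ) {B : Set ℝ} (hB : MeasurableSet B) :
    μ B = (μ.toJordanDecomposition.posPart B).toReal
        - (μ.toJordanDecomposition.negPart B).toReal := by
  conv_lhs => rw [← μ.toSignedMeasure_toJordanDecomposition]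
  show (μ.toJordanDecomposition.posPart.toSignedMeasure
      - μ.toJordanDecomposition.negPart.toSignedMeasure) B = _
  rw [Measure.toSignedMeasure_sub_apply hB]
  rfl

lemma tv_toReal (μ : SignedMeasure ℝ) :
    (μ.totalVariation univ).toReal
      = (μ.toJordanDecomposition.posPart univ).toReal
        + (μ.toJordanDecomposition.negPart univ).toReal := by
  rw [SignedMeasure.totalVariation, Measure.add_apply,
    ENNReal.toReal_add (measure_ne_top _ _) (measure_ne_top _ _)]

/-- Total-variation bound on values of a signed measure. -/
lemma abs_apply_le (μ : SignedMeasure ℝ) {B : Set ℝ} (hB : MeasurableSet B) :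
    |μ B| ≤ (μ.totalVariation univ).toReal := by
  rw [sm_apply μ hB, tv_toReal]
  have h1 : (μ.toJordanDecomposition.posPart B).toReal
      ≤ (μ.toJordanDecomposition.posPart univ).toReal :=
    ENNReal.toReal_mono (measure_ne_top _ _) (measure_mono (subset_univ B))
  have h2 : (μ.toJordanDecomposition.negPart B).toReal
      ≤ (μ.toJordanDecomposition.negPart univ).toReal :=
    ENNReal.toReal_mono (measure_ne_top _ _) (measure_mono (subset_univ B))
  have h3 : (0:ℝ) ≤ (μ.toJordanDecomposition.posPart B).toReal := ENNReal.toReal_nonneg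
  have h4 : (0:ℝ) ≤ (μ.toJordanDecomposition.negPart B).toReal := ENNReal.toReal_nonneg
  rw [abs_le]
  constructor <;> linarith

/-- The primitive of a signed measure is measurable. -/
lemma meas_primitive (μ : SignedMeasure ℝ) :
    Measurable (fun u => μ (Icc 0 u)) := by
  have hpos : Monotone (fun u => (μ.toJordanDecomposition.posPart (Icc 0 u)).toReal) :=
    fun a b hab => ENNReal.toReal_mono (measure_ne_top _ _)
      (measure_mono (Icc_subset_Icc_right hab))
  have hneg : Monotone (fun u => (μ.toJordanDecomposition.negPart (Icc 0 u)).toReal) :=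
    fun a b hab => ENNReal.toReal_mono (measure_ne_top _ _)
      (measure_mono (Icc_subset_Icc_right hab))
  have : (fun u => μ (Icc 0 u))
      = fun u => (μ.toJordanDecomposition.posPart (Icc 0 u)).toReal
        - (μ.toJordanDecomposition.negPart (Icc 0 u)).toReal :=
    funext fun u => sm_apply μ measurableSet_Icc
  rw [this]
  exact hpos.measurable.sub hneg.measurable

lemma integrableOn_bounded {f : ℝ → ℝ} {I : Set ℝ} (hIm : MeasurableSet I)
    (hI : volume I < ⊤) (hf : Measurable f) {M : ℝ} (hb : ∀ x ∈ I, |f x| ≤ M) :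
    IntegrableOn f I volume := by
  haveI : IsFiniteMeasure (volume.restrict I) :=
    ⟨by rwa [Measure.restrict_apply_univ]⟩
  refine Integrable.mono' (integrable_const M) hf.aestronglyMeasurable ?_
  filter_upwards [ae_restrict_mem hIm] with x hx
  simpa [Real.norm_eq_abs] using hb x hx

/-- Representation of the integral of a polynomial against a finite measure,
via the primitive (integration by parts / Fubini). -/
lemma rep_meas (T : ℝ) (hT : 0 < T) (ν : Measure ℝ) [IsFiniteMeasure ν]
    (p : Polynomial ℝ) :
    ∫ s in Icc 0 T, p.eval s ∂ν
      = p.eval T * (ν (Icc 0 T)).toReal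
        - ∫ u in Icc 0 T, p.derivative.eval u * (ν (Icc 0 u)).toReal := by
  set I : Set ℝ := Icc 0 T with hIdef
  have hIm : MeasurableSet I := measurableSet_Icc
  set g' : ℝ → ℝ := fun u => p.derivative.eval u with hg'
  obtain ⟨M, hM⟩ := (isCompact_Icc : IsCompact I).exists_bound_of_continuousOn
    (p.derivative.continuous).continuousOn
  have hTI : T ∈ I := right_mem_Icc.2 hT.le
  have hM0 : (0:ℝ) ≤ M := le_trans (norm_nonneg _) (hM T hTI)
  set S : Set (ℝ × ℝ) := {q : ℝ × ℝ | q.1 ≤ q.2 ∧ q.2 ≤ T} with hSdef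
  have hSm : MeasurableSet S := by
    have h1 : MeasurableSet {q : ℝ × ℝ | q.1 ≤ q.2} :=
      measurableSet_le measurable_fst measurable_snd
    have h2 : MeasurableSet {q : ℝ × ℝ | q.2 ≤ T} :=
      measurable_snd measurableSet_Iic
    exact h1.inter h2
  set H : ℝ × ℝ → ℝ := S.indicator (fun q => g' q.2) with hHdef
  have hHmeas : Measurable H :=
    ((p.derivative.continuous.measurable).comp measurable_snd).indicator hSm
  haveI : IsFiniteMeasure (volume.restrict I) :=
    ⟨by rw [Measure.restrict_apply_univ]; exact isCompact_Icc.measure_lt_top⟩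
  -- pointwise identity for s ∈ I
  have key : ∀ s ∈ I, p.eval s = p.eval T - ∫ u in I, H (s, u) := by
    intro s hs
    have h1 : (fun u => H (s, u)) = (Icc s T).indicator g' := by
      funext u
      simp only [hHdef, Set.indicator, hSdef, Set.mem_setOf_eq, mem_Icc]
    have h2 : ∫ u in I, H (s, u) = ∫ u in I ∩ Icc s T, g' u := by
      rw [show (∫ u in I, H (s, u)) = ∫ u in I, (Icc s T).indicator g' u by rw [h1],
        setIntegral_indicator measurableSet_Icc]
    have h3 : I ∩ Icc s T = Icc s T :=
      inter_eq_self_of_subset_right (Icc_subset_Icc hs.1 le_rfl)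
    have h4 : ∫ u in s..T, g' u = p.eval T - p.eval s :=
      intervalIntegral.integral_eq_sub_of_hasDerivAt
        (fun x _ => p.hasDerivAt x)
        ((p.derivative.continuous).intervalIntegrable s T)
    rw [h2, h3, integral_Icc_eq_integral_Ioc, ← intervalIntegral.integral_of_le hs.2, h4]
    ring
  -- integrability on the product
  have hprod : ((ν.restrict I).prod (volume.restrict I))
      = (ν.prod volume).restrict (I ×ˢ I) := Measure.prod_restrict I I
  have hae : ∀ᵐ q ∂((ν.restrict I).prod (volume.restrict I)), q ∈ I ×ˢ I := by
    rw [hprod]; exact ae_restrict_mem (hIm.prod hIm)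
  have hHint : Integrable H ((ν.restrict I).prod (volume.restrict I)) := by
    refine Integrable.mono' (integrable_const M) hHmeas.aestronglyMeasurable ?_
    filter_upwards [hae] with q hq
    by_cases h : q ∈ S
    · rw [hHdef, indicator_of_mem h]
      exact hM _ (mem_prod.1 hq).2
    · rw [hHdef, indicator_of_notMem h, norm_zero]; exact hM0
  have hswap : ∫ s in I, (∫ u in I, H (s, u)) ∂ν
      = ∫ u in I, (∫ s in I, H (s, u) ∂ν) :=
    integral_integral_swap (f := fun s u => H (s, u)) hHint
  -- inner integral computation for u ∈ I
  have inner : ∀ u ∈ I, (∫ s in I, H (s, u) ∂ν) = g' u * (ν (Icc 0 u)).toReal := by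
    intro u hu
    have h5 : (fun s => H (s, u)) = (Iic u).indicator (fun _ => g' u) := by
      funext s
      by_cases h : s ≤ u
      · rw [hHdef, indicator_of_mem (show (s, u) ∈ S from ⟨h, hu.2⟩),
          indicator_of_mem (show s ∈ Iic u from h)]
      · rw [hHdef, indicator_of_notMem (show (s, u) ∉ S from fun hc => h hc.1),
          indicator_of_notMem (show s ∉ Iic u from h)]
    have h6 : I ∩ Iic u = Icc 0 u := by
      ext x
      simp only [hIdef, mem_inter_iff, mem_Icc, mem_Iic]
      exact ⟨fun h => ⟨h.1.1, h.2⟩, fun h => ⟨⟨h.1, h.2.trans hu.2⟩, h.2⟩⟩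
    rw [show (∫ s in I, H (s, u) ∂ν) = ∫ s in I, (Iic u).indicator (fun _ => g' u) s ∂ν
        by rw [h5],
      setIntegral_indicator measurableSet_Iic, h6, setIntegral_const, smul_eq_mul, mul_comm]
    rfl
  calc ∫ s in I, p.eval s ∂ν
      = ∫ s in I, (p.eval T - ∫ u in I, H (s, u)) ∂ν :=
        setIntegral_congr_fun hIm fun s hs => key s hs
    _ = (∫ _ in I, p.eval T ∂ν) - ∫ s in I, (∫ u in I, H (s, u)) ∂ν := by
        refine integral_sub (integrable_const _) ?_
        exact Integrable.integral_prod_left (f := H) hHint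
    _ = p.eval T * (ν I).toReal - ∫ u in I, (∫ s in I, H (s, u) ∂ν) := by
        rw [setIntegral_const, smul_eq_mul, mul_comm, hswap]
        rfl
    _ = p.eval T * (ν I).toReal - ∫ u in I, g' u * (ν (Icc 0 u)).toReal := by
        rw [setIntegral_congr_fun hIm fun u hu => inner u hu]

/-- Signed-measure version of the representation lemma. -/
lemma rep_signed (T : ℝ) (hT : 0 < T) (μ : SignedMeasure ℝ) (p : Polynomial ℝ) :
    sInt μ (Icc 0 T) (fun x => p.eval x)
      = p.eval T * μ (Icc 0 T)
        - ∫ u in Icc 0 T, p.derivative.eval u * μ (Icc 0 u) := by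
  set I : Set ℝ := Icc 0 T with hIdef
  have hIm : MeasurableSet I := measurableSet_Icc
  have hIvol : volume I < ⊤ := isCompact_Icc.measure_lt_top
  obtain ⟨M, hM⟩ := (isCompact_Icc : IsCompact I).exists_bound_of_continuousOn
    (p.derivative.continuous).continuousOn
  have hpos := rep_meas T hT μ.toJordanDecomposition.posPart p
  have hneg := rep_meas T hT μ.toJordanDecomposition.negPart p
  have hintp : IntegrableOn
      (fun u => p.derivative.eval u * (μ.toJordanDecomposition.posPart (Icc 0 u)).toReal)
      I volume := by
    refine integrableOn_bounded hIm hIvol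
      ((p.derivative.continuous.measurable).mul (Monotone.measurable (fun a b hab =>
        ENNReal.toReal_mono (measure_ne_top _ _)
          (measure_mono (Icc_subset_Icc_right hab)))))
      (M := M * (μ.toJordanDecomposition.posPart univ).toReal) ?_
    intro x hx
    rw [abs_mul]
    refine mul_le_mul ((Real.norm_eq_abs _) ▸ hM x hx) ?_ (abs_nonneg _) ?_
    · rw [abs_of_nonneg ENNReal.toReal_nonneg]
      exact ENNReal.toReal_mono (measure_ne_top _ _) (measure_mono (subset_univ _))
    · exact le_trans (norm_nonneg _) (hM x hx)
  have hintn : IntegrableOn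
      (fun u => p.derivative.eval u * (μ.toJordanDecomposition.negPart (Icc 0 u)).toReal)
      I volume := by
    refine integrableOn_bounded hIm hIvol
      ((p.derivative.continuous.measurable).mul (Monotone.measurable (fun a b hab =>
        ENNReal.toReal_mono (measure_ne_top _ _)
          (measure_mono (Icc_subset_Icc_right hab)))))
      (M := M * (μ.toJordanDecomposition.negPart univ).toReal) ?_
    intro x hx
    rw [abs_mul]
    refine mul_le_mul ((Real.norm_eq_abs _) ▸ hM x hx) ?_ (abs_nonneg _) ?_
    · rw [abs_of_nonneg ENNReal.toReal_nonneg]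
      exact ENNReal.toReal_mono (measure_ne_top _ _) (measure_mono (subset_univ _))
    · exact le_trans (norm_nonneg _) (hM x hx)
  have h6 : ∫ u in I, p.derivative.eval u * μ (Icc 0 u)
      = (∫ u in I, p.derivative.eval u * (μ.toJordanDecomposition.posPart (Icc 0 u)).toReal)
        - ∫ u in I, p.derivative.eval u * (μ.toJordanDecomposition.negPart (Icc 0 u)).toReal := by
    rw [← integral_sub hintp hintn]
    refine setIntegral_congr_fun hIm fun u _ => ?_
    rw [sm_apply μ (measurableSet_Icc : MeasurableSet (Icc 0 u))]
    ring
  rw [sInt, hpos, hneg, sm_apply μ (hIdef ▸ hIm), h6]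
  ring

/-- Difference bound for `sInt` of two functions uniformly close on `[0,T]`. -/
lemma sInt_diff_bound (T : ℝ) (hT : 0 < T) (μ : SignedMeasure ℝ) {φ ψ : ℝ → ℝ}
    (hφ : ContinuousOn φ (Icc 0 T)) (hψ : ContinuousOn ψ (Icc 0 T)) {δ : ℝ}
    (hδ : ∀ x ∈ Icc 0 T, |φ x - ψ x| ≤ δ) :
    |sInt μ (Icc 0 T) φ - sInt μ (Icc 0 T) ψ| ≤ δ * (μ.totalVariation univ).toReal := by
  set I : Set ℝ := Icc 0 T with hIdef
  set νp := μ.toJordanDecomposition.posPart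
  set νn := μ.toJordanDecomposition.negPart
  have hφp : IntegrableOn φ I νp := hφ.integrableOn_compact isCompact_Icc
  have hψp : IntegrableOn ψ I νp := hψ.integrableOn_compact isCompact_Icc
  have hφn : IntegrableOn φ I νn := hφ.integrableOn_compact isCompact_Icc
  have hψn : IntegrableOn ψ I νn := hψ.integrableOn_compact isCompact_Icc
  have e1 : sInt μ I φ - sInt μ I ψ
      = (∫ t in I, (φ t - ψ t) ∂νp) - ∫ t in I, (φ t - ψ t) ∂νn := by
    rw [sInt, sInt, integral_sub hφp hψp, integral_sub hφn hψn]
    ring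
  have b1 : ‖∫ t in I, (φ t - ψ t) ∂νp‖ ≤ δ * (νp I).toReal :=
    norm_setIntegral_le_of_norm_le_const (f := fun t => φ t - ψ t) (C := δ) (measure_lt_top _ _)
      (fun x hx => by simpa [Real.norm_eq_abs] using hδ x hx)
  have b2 : ‖∫ t in I, (φ t - ψ t) ∂νn‖ ≤ δ * (νn I).toReal :=
    norm_setIntegral_le_of_norm_le_const (f := fun t => φ t - ψ t) (C := δ) (measure_lt_top _ _)
      (fun x hx => by simpa [Real.norm_eq_abs] using hδ x hx)
  have hδ0 : 0 ≤ δ := le_trans (abs_nonneg _) (hδ T (right_mem_Icc.2 hT.le))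
  have hp : (νp I).toReal ≤ (νp univ).toReal :=
    ENNReal.toReal_mono (measure_ne_top _ _) (measure_mono (subset_univ _))
  have hn : (νn I).toReal ≤ (νn univ).toReal :=
    ENNReal.toReal_mono (measure_ne_top _ _) (measure_mono (subset_univ _))
  rw [e1, tv_toReal]
  calc |(∫ t in I, (φ t - ψ t) ∂νp) - ∫ t in I, (φ t - ψ t) ∂νn|
      ≤ |∫ t in I, (φ t - ψ t) ∂νp| + |∫ t in I, (φ t - ψ t) ∂νn| := abs_sub _ _
    _ ≤ δ * (νp I).toReal + δ * (νn I).toReal := by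
        rw [Real.norm_eq_abs] at b1 b2; linarith
    _ ≤ δ * ((νp univ).toReal + (νn univ).toReal) := by nlinarith

end WeakStarAux

open WeakStarAux in
/-- **Weak-* convergence from convergence of primitives** (Lemma 2.7 (i)).
If a sequence of ℝᵏ-valued measures on [0,T] is uniformly bounded in total variation and
its primitives `t ↦ γ_i([0,t])` converge to those of γ on a full-measure Borel set ℰ
containing T, then γ_i ⇀* γ. -/
theorem weakStar_of_primitive_convergence
    (T : ℝ) (hT : 0 < T) (k : ℕ)
    (γi : ℕ → Fin k → SignedMeasure ℝ) (γ : Fin k → SignedMeasure ℝ)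
    -- measures on [0,T]
    (hsupp : ∀ i j, ∀ B : Set ℝ, MeasurableSet B → Disjoint B (Icc 0 T) → γi i j B = 0)
    (hsupp0 : ∀ j, ∀ B : Set ℝ, MeasurableSet B → Disjoint B (Icc 0 T) → γ j B = 0)
    -- uniform bound in total variation
    (htvbound : ∃ C : ℝ, ∀ i,
      (∑ j, ((γi i j).totalVariation (univ : Set ℝ)).toReal) ≤ C)
    -- full-measure Borel set ℰ ⊆ [0,T] with T ∈ ℰ on which primitives converge
    (E : Set ℝ) (hEsub : E ⊆ Icc 0 T) (hEmeas : MeasurableSet E)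
    (hEfull : volume (Icc 0 T \ E) = 0) (hTE : T ∈ E)
    (hconv : ∀ t ∈ E, ∀ j,
      Tendsto (fun i => γi i j (Icc 0 t)) atTop (nhds (γ j (Icc 0 t)))) :
    -- conclusion: γ_i ⇀* γ
    ∀ j, ∀ φ : ℝ → ℝ, ContinuousOn φ (Icc 0 T) →
      Tendsto (fun i => sInt (γi i j) (Icc 0 T) φ) atTop
        (nhds (sInt (γ j) (Icc 0 T) φ)) := by
  intro j φ hφ
  obtain ⟨C, hC⟩ := htvbound
  set I : Set ℝ := Icc 0 T with hIdef
  have hIm : MeasurableSet I := measurableSet_Icc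
  haveI : IsFiniteMeasure (volume.restrict I) :=
    ⟨by rw [Measure.restrict_apply_univ]; exact isCompact_Icc.measure_lt_top⟩
  -- per-index total variation bound
  have hCi : ∀ i, ((γi i j).totalVariation univ).toReal ≤ C := fun i =>
    le_trans (Finset.single_le_sum (f := fun j' => ((γi i j').totalVariation univ).toReal)
      (fun _ _ => ENNReal.toReal_nonneg) (Finset.mem_univ j)) (hC i)
  have hC0 : (0:ℝ) ≤ C := le_trans ENNReal.toReal_nonneg (hCi 0)
  set Cγ : ℝ := ((γ j).totalVariation univ).toReal with hCγ
  have hCγ0 : (0:ℝ) ≤ Cγ := ENNReal.toReal_nonneg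
  set M : ℝ := C + Cγ + 1 with hMdef
  have hM0 : (0:ℝ) < M := by positivity
  -- a.e. membership in E
  have haeE : ∀ᵐ u ∂(volume.restrict I), u ∈ E := by
    rw [ae_iff]
    have h : {u | ¬ u ∈ E} = Eᶜ := rfl
    rw [h, Measure.restrict_apply hEmeas.compl]
    have : Eᶜ ∩ I = I \ E := by rw [Set.diff_eq, Set.inter_comm]
    rw [this]
    exact hEfull
  -- convergence for polynomials
  have hpoly : ∀ p : Polynomial ℝ,
      Tendsto (fun i => sInt (γi i j) I (fun x => p.eval x)) atTop
        (nhds (sInt (γ j) I (fun x => p.eval x))) := by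
    intro p
    have hrep : ∀ μ : SignedMeasure ℝ, sInt μ I (fun x => p.eval x)
        = p.eval T * μ I - ∫ u in I, p.derivative.eval u * μ (Icc 0 u) :=
      fun μ => rep_signed T hT μ p
    simp only [hrep]
    obtain ⟨M', hM'⟩ := (isCompact_Icc : IsCompact I).exists_bound_of_continuousOn
      (p.derivative.continuous).continuousOn
    have hM'0 : (0:ℝ) ≤ M' := le_trans (norm_nonneg _) (hM' T (right_mem_Icc.2 hT.le))
    refine Tendsto.sub ((hconv T hTE j).const_mul _) ?_
    refine tendsto_integral_of_dominated_convergence (bound := fun _ => M' * C)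
      (fun i => (((p.derivative.continuous.measurable).mul
        (meas_primitive (γi i j))).aestronglyMeasurable)) (integrable_const _) ?_ ?_
    · intro i
      filter_upwards [ae_restrict_mem hIm] with u hu
      rw [Real.norm_eq_abs, abs_mul]
      refine mul_le_mul ((Real.norm_eq_abs _) ▸ hM' u hu)
        (le_trans (abs_apply_le (γi i j) measurableSet_Icc) (hCi i)) (abs_nonneg _) hM'0
    · filter_upwards [haeE] with u hu
      exact (hconv u hu j).const_mul _
  -- final ε-argument
  rw [Metric.tendsto_atTop]
  intro ε hε
  set δ : ℝ := ε / (4 * M) with hδdef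
  have hδ : 0 < δ := by positivity
  obtain ⟨p, hp⟩ := exists_polynomial_near_of_continuousOn 0 T φ hφ δ hδ
  have hpc : ContinuousOn (fun x => p.eval x) I := (p.continuous).continuousOn
  obtain ⟨N, hN⟩ := (Metric.tendsto_atTop.1 (hpoly p)) (ε/4) (by positivity)
  refine ⟨N, fun i hi => ?_⟩
  have h1 : |sInt (γi i j) I φ - sInt (γi i j) I (fun x => p.eval x)| ≤ δ * C := by
    refine le_trans (sInt_diff_bound T hT (γi i j) hφ hpc
      (fun x hx => by rw [abs_sub_comm]; exact le_of_lt (hp x hx))) ?_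
    exact mul_le_mul_of_nonneg_left (hCi i) hδ.le
  have h2 : |sInt (γ j) I (fun x => p.eval x) - sInt (γ j) I φ| ≤ δ * Cγ := by
    refine le_trans (sInt_diff_bound T hT (γ j) hpc hφ (fun x hx => le_of_lt (hp x hx))) ?_
    exact le_of_eq rfl
  have h3 := hN i hi
  rw [Real.dist_eq] at h3
  rw [Real.dist_eq]
  have hδM : δ * M = ε / 4 := by
    rw [hδdef]; field_simp
  have hchain : |sInt (γi i j) I φ - sInt (γ j) I φ|
      ≤ |sInt (γi i j) I φ - sInt (γi i j) I (fun x => p.eval x)|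
        + |sInt (γi i j) I (fun x => p.eval x) - sInt (γ j) I (fun x => p.eval x)|
        + |sInt (γ j) I (fun x => p.eval x) - sInt (γ j) I φ| := by
    have t1 := abs_sub_le (sInt (γi i j) I φ) (sInt (γi i j) I (fun x => p.eval x))
      (sInt (γ j) I φ)
    have t2 := abs_sub_le (sInt (γi i j) I (fun x => p.eval x))
      (sInt (γ j) I (fun x => p.eval x)) (sInt (γ j) I φ)
    linarith
  have hCM : δ * C ≤ ε / 4 := by
    rw [← hδM]
    refine mul_le_mul_of_nonneg_left ?_ hδ.le
    rw [hMdef]; linarith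
  have hCγM : δ * Cγ ≤ ε / 4 := by
    rw [← hδM]
    refine mul_le_mul_of_nonneg_left ?_ hδ.le
    rw [hMdef]; linarith
  calc |sInt (γi i j) I φ - sInt (γ j) I φ|
      ≤ δ * C + ε / 4 + δ * Cγ := by linarith
    _ ≤ ε / 4 + ε / 4 + ε / 4 := by linarith
    _ < ε := by linarith

end
end

section
/- Assume (H1)–(H3). Let (μ,α) be an impulsive control, ξ ∈ ℝⁿ, and define x̃₀ : [−h,T] → ℝⁿ by x̃₀(t) := ∫_{[0,t]} G(s,α(s)) μ(ds) for t ∈ (0,T] and x̃₀(t) := 0 for t ∈ [−h,0]. Then a bounded-variation function x : [−h,T] → ℝⁿ is a trajectory associated with (μ,α) with x(0) = ξ if and only if x̃ := x − x̃₀ is absolutely continuous on [0,T] and solves the delayed ordinary differential equation x̃'(t) = f(t, {x̃(t−h_k) + x̃₀(t−h_k)}_{k=0}^N, α(t)) a.e. on [0,T], with x̃(t) = ζ(t) a.e. on [−h,0) and x̃(0) = ξ. -/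
open MeasureTheory Set Filter Topology

noncomputable section

lemma bv_of_bound {E : Type*} [NormedAddCommGroup E] {x : ℝ → E} {φ : ℝ → ℝ} {a b : ℝ}
    (hd : ∀ s ∈ Icc a b, ∀ t ∈ Icc a b, s ≤ t → ‖x t - x s‖ ≤ φ t - φ s) :
    BoundedVariationOn x (Icc a b) := by
  rcases le_or_gt a b with hab | hab
  · have key : eVariationOn x (Icc a b) ≤ ENNReal.ofReal (φ b - φ a) := by
      apply iSup_le
      rintro ⟨n, u, hu, us⟩
      calc ∑ i ∈ Finset.range n, edist (x (u (i+1))) (x (u i))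
          ≤ ∑ i ∈ Finset.range n, ENNReal.ofReal (φ (u (i+1)) - φ (u i)) := by
            refine Finset.sum_le_sum fun i _ => ?_
            rw [edist_dist, dist_eq_norm]
            exact ENNReal.ofReal_le_ofReal (hd _ (us i) _ (us (i+1)) (hu (Nat.le_succ i)))
        _ = ENNReal.ofReal (∑ i ∈ Finset.range n, (φ (u (i+1)) - φ (u i))) := by
            rw [ENNReal.ofReal_sum_of_nonneg]
            intro i _
            exact le_trans (norm_nonneg _) (hd _ (us i) _ (us (i+1)) (hu (Nat.le_succ i)))
        _ ≤ ENNReal.ofReal (φ b - φ a) := by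
            apply ENNReal.ofReal_le_ofReal
            rw [Finset.sum_range_sub (fun i => φ (u i))]
            have h1 : φ (u n) ≤ φ b := by
              have h := hd _ (us n) _ (right_mem_Icc.2 hab) (us n).2
              have := norm_nonneg (x b - x (u n)); linarith
            have h2 : φ a ≤ φ (u 0) := by
              have h := hd _ (left_mem_Icc.2 hab) _ (us 0) (us 0).1
              have := norm_nonneg (x (u 0) - x a); linarith
            linarith
    exact ne_top_of_le_ne_top ENNReal.ofReal_ne_top key
  · simp [BoundedVariationOn, Icc_eq_empty hab.not_ge, eVariationOn.subsingleton,
      Set.subsingleton_empty]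

lemma Ev_norm_le_sum_abs {n : ℕ} (v : EuclideanSpace ℝ (Fin n)) : ‖v‖ ≤ ∑ i, |v i| := by
  rw [EuclideanSpace.norm_eq]
  have h1 : ∑ i, ‖v i‖ ^ 2 ≤ (∑ i, ‖v i‖) ^ 2 :=
    Finset.sum_sq_le_sq_sum_of_nonneg (fun i _ => norm_nonneg _)
  calc Real.sqrt (∑ i, ‖v i‖ ^ 2) ≤ Real.sqrt ((∑ i, ‖v i‖) ^ 2) := Real.sqrt_le_sqrt h1
    _ = ∑ i, ‖v i‖ := Real.sqrt_sq (Finset.sum_nonneg fun i _ => norm_nonneg _)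
    _ = ∑ i, |v i| := by simp [Real.norm_eq_abs]

/-- **Reduction of the impulsive delayed system to a conventional delayed ODE**
(from the proof of Proposition 2.1): x is a trajectory associated with (μ,α) with
x(0) = ξ if and only if `x̃ = x − x̃₀`, where `x̃₀(t) = ∫_{[0,t]} G(s,α(s)) μ(ds)` for
t ∈ (0,T] and `x̃₀ = 0` on [−h,0], is an absolutely continuous solution (in integral
form) of the delayed ODE `x̃' (t) = f(t,{x̃(t−h_k) + x̃₀(t−h_k)},α(t))` with history ζ
and initial value ξ. -/
theorem trajectory_iff_shifted_solution
    (T : ℝ) (hT : 0 < T) (n m q N : ℕ) (hN : 1 ≤ N)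
    (hdel : Fin (N + 1) → ℝ) (hdel0 : hdel 0 = 0) (hmono : StrictMono hdel)
    (h : ℝ) (hh : h = hdel (Fin.last N))
    (K : Set (Fin m → ℝ)) (hKclosed : IsClosed K) (hKconvex : Convex ℝ K)
    (hKcone : ∀ w ∈ K, ∀ r : ℝ, 0 < r → r • w ∈ K)
    (A : ℝ → Set (Fin q → ℝ))
    (f : ℝ → Hist n N → (Fin q → ℝ) → Ev n)
    (G : ℝ → (Fin q → ℝ) → Matrix (Fin n) (Fin m) ℝ)
    (ζ : ℝ → Ev n)
    (hζmeas : AEStronglyMeasurable ζ (volume.restrict (Icc (-h) 0)))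
    (hζbdd : ∃ C : ℝ, ∀ᵐ t ∂(volume.restrict (Icc (-h) 0)), ‖ζ t‖ ≤ C)
    -- (H1)
    (H1 : MeasurableSet[LBprod q] {p : ℝ × (Fin q → ℝ) | p.2 ∈ A p.1})
    -- (H2)
    (H2meas : ∀ z : Hist n N, Measurable[LBprod q] (fun p : ℝ × (Fin q → ℝ) => f p.1 z p.2))
    (H2lip : ∀ M : ℝ, 0 < M → ∃ L : ℝ → ℝ, (∀ t, 0 ≤ L t) ∧
      IntegrableOn L (Icc 0 T) volume ∧
      ∀ᵐ t ∂(volume.restrict (Icc 0 T)), ∀ z y : Hist n N, ‖z‖ ≤ M → ‖y‖ ≤ M →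
        ∀ a ∈ A t, ‖f t z a - f t y a‖ ≤ L t * ‖z - y‖)
    -- (H3)
    (H3 : ∃ c : ℝ → ℝ, (∀ t, 0 ≤ c t) ∧ IntegrableOn c (Icc 0 T) volume ∧
      ∀ᵐ t ∂(volume.restrict (Icc 0 T)), ∀ z : Hist n N, ∀ a ∈ A t,
        ‖f t z a‖ ≤ c t * (1 + ‖z‖))
    -- the impulsive control and the initial condition
    (μ : Fin m → SignedMeasure ℝ) (α : ℝ → Fin q → ℝ)
    (hctrl : IsImpulsiveControl T K A G μ α)
    (ξ : Ev n)
    -- x̃₀(t) = ∫_{[0,t]} G(s,α(s)) μ(ds) on (0,T], = 0 on [−h,0]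
    (x0til : ℝ → Ev n)
    (hx0til : ∀ t : ℝ, x0til t =
      if 0 < t then muInt μ (fun s => G s (α s)) (Icc 0 t) else 0)
    (x : ℝ → Ev n) :
    (IsTrajectory T h hdel f G ζ μ α x ∧ x 0 = ξ) ↔
      ((fun t => x t - x0til t) 0 = ξ ∧
       (∀ᵐ t ∂(volume.restrict (Ico (-h) 0)), x t - x0til t = ζ t) ∧
       IntegrableOn
         (fun s => f s (histOf hdel (fun r => (x r - x0til r) + x0til r) s) (α s))
         (Icc 0 T) volume ∧
       (∀ t ∈ Icc 0 T, x t - x0til t = ξ +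
          ∫ s in (0:ℝ)..t,
            f s (histOf hdel (fun r => (x r - x0til r) + x0til r) s) (α s))) := by
  have hfx : (fun r => (x r - x0til r) + x0til r) = x := by funext r; abel
  have h00 : x0til 0 = 0 := by rw [hx0til]; simp
  constructor
  · rintro ⟨traj, hx0⟩
    refine ⟨by simp [h00, hx0], ?_, ?_, ?_⟩
    · filter_upwards [traj.init, ae_restrict_mem measurableSet_Ico] with t h1 h2
      rw [hx0til t, if_neg (not_lt.2 h2.2.le), sub_zero]; exact h1
    · rw [hfx]; exact traj.integ
    · intro t ht
      rw [hfx]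
      rcases eq_or_lt_of_le ht.1 with h0t | h0t
      · rw [← h0t]; simp [h00, hx0]
      · have he := traj.eq t ⟨h0t, ht.2⟩
        rw [hx0til t, if_pos h0t, he, hx0]; abel
  · rintro ⟨h0, hinit, hint, heq⟩
    rw [hfx] at hint heq
    have hx00 : x 0 = ξ := by simpa [h00] using h0
    set F : ℝ → Ev n := fun s => f s (histOf hdel x s) (α s) with hF
    set g : ℝ → Fin n → ℝ := fun s => (G s (α s)).mulVec (rnd μ s) with hg
    have hgi : ∀ i, IntegrableOn (fun s => g s i) (Icc 0 T) (tvm μ) := fun i =>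
      (ContinuousLinearMap.proj i : (Fin n → ℝ) →L[ℝ] ℝ).integrable_comp hctrl.integ
    have hgia : ∀ i, IntegrableOn (fun s => |g s i|) (Icc 0 T) (tvm μ) := fun i => (hgi i).abs
    have hsplit : ∀ (ψ : ℝ → ℝ), IntegrableOn ψ (Icc 0 T) (tvm μ) →
        ∀ s t : ℝ, 0 ≤ s → s ≤ t → t ≤ T →
        ∫ r in Icc 0 t, ψ r ∂(tvm μ)
          = (∫ r in Icc 0 s, ψ r ∂(tvm μ)) + ∫ r in Ioc s t, ψ r ∂(tvm μ) := by
      intro ψ hψ s t hs hst htT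
      rw [← Icc_union_Ioc_eq_Icc hs hst,
        setIntegral_union ((Iic_disjoint_Ioc le_rfl).mono Icc_subset_Iic_self le_rfl)
          measurableSet_Ioc (hψ.mono_set (Icc_subset_Icc le_rfl (hst.trans htT)))
          (hψ.mono_set (fun r hr => ⟨hs.trans hr.1.le, hr.2.trans htT⟩))]
    have hFiv : ∀ a b : ℝ, 0 ≤ a → a ≤ b → b ≤ T → IntervalIntegrable F volume a b := by
      intro a b ha hab hbT
      refine IntegrableOn.intervalIntegrable ?_
      rw [uIcc_of_le hab]
      exact hint.mono_set (Icc_subset_Icc ha hbT)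
    have hFniv : ∀ a b : ℝ, 0 ≤ a → a ≤ b → b ≤ T →
        IntervalIntegrable (fun s => ‖F s‖) volume a b := by
      intro a b ha hab hbT
      refine IntegrableOn.intervalIntegrable ?_
      rw [uIcc_of_le hab]
      exact (hint.mono_set (Icc_subset_Icc ha hbT)).norm
    set φ₂ : ℝ → ℝ := fun t =>
      if 0 < t then ∑ i, ∫ s in Icc 0 t, |g s i| ∂(tvm μ) else 0 with hφ₂
    have hmuc : ∀ (t : ℝ) (i : Fin n),
        (muInt μ (fun s => G s (α s)) (Icc 0 t)) i = ∫ r in Icc 0 t, g r i ∂(tvm μ) := by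
      intro t i; rfl
    have habs : ∀ (ψ : ℝ → ℝ) (B : Set ℝ),
        |∫ r in B, ψ r ∂(tvm μ)| ≤ ∫ r in B, |ψ r| ∂(tvm μ) := by
      intro ψ B
      simpa [Real.norm_eq_abs] using
        norm_integral_le_integral_norm (μ := (tvm μ).restrict B) ψ
    have hx0bnd : ∀ s ∈ Icc 0 T, ∀ t ∈ Icc 0 T, s ≤ t →
        ‖x0til t - x0til s‖ ≤ φ₂ t - φ₂ s := by
      intro s hs t ht hst
      rcases eq_or_lt_of_le hs.1 with h0s | h0s
      · -- s = 0
        rw [← h0s] at hst ⊢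
        rw [h00, sub_zero]
        have hφ0 : φ₂ 0 = 0 := by simp [hφ₂]
        rw [hφ0, sub_zero]
        rcases eq_or_lt_of_le hst with h0t | h0t
        · rw [← h0t, h00]; simp [hφ₂]
        · have hφt : φ₂ t = ∑ i, ∫ r in Icc 0 t, |g r i| ∂(tvm μ) := by
            simp only [hφ₂, if_pos h0t]
          rw [hx0til t, if_pos h0t, hφt]
          refine le_trans (Ev_norm_le_sum_abs _) (Finset.sum_le_sum fun i _ => ?_)
          rw [hmuc t i]
          exact habs _ _
      · -- 0 < s ≤ t
        have h0t : (0:ℝ) < t := lt_of_lt_of_le h0s hst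
        have hcomp : ∀ i : Fin n, (x0til t - x0til s) i = ∫ r in Ioc s t, g r i ∂(tvm μ) := by
          intro i
          have : (x0til t - x0til s) i = (x0til t) i - (x0til s) i := rfl
          rw [this, hx0til t, if_pos h0t, hx0til s, if_pos h0s, hmuc t i, hmuc s i,
            hsplit (fun r => g r i) (hgi i) s t h0s.le hst ht.2]
          ring
        have hφd : φ₂ t - φ₂ s = ∑ i, ∫ r in Ioc s t, |g r i| ∂(tvm μ) := by
          simp only [hφ₂, if_pos h0t, if_pos h0s]
          rw [← Finset.sum_sub_distrib]
          refine Finset.sum_congr rfl fun i _ => ?_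
          rw [hsplit (fun r => |g r i|) (hgia i) s t h0s.le hst ht.2]
          ring
        rw [hφd]
        refine le_trans (Ev_norm_le_sum_abs _) (Finset.sum_le_sum fun i _ => ?_)
        rw [hcomp i]
        exact habs _ _
    set φ : ℝ → ℝ := fun r => (∫ u in (0:ℝ)..r, ‖F u‖) + φ₂ r with hφ
    have hbd : ∀ s ∈ Icc 0 T, ∀ t ∈ Icc 0 T, s ≤ t → ‖x t - x s‖ ≤ φ t - φ s := by
      intro s hs t ht hst
      have hxt : x t = (ξ + ∫ u in (0:ℝ)..t, F u) + x0til t := eq_add_of_sub_eq (heq t ht)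
      have hxs : x s = (ξ + ∫ u in (0:ℝ)..s, F u) + x0til s := eq_add_of_sub_eq (heq s hs)
      have hadj : (∫ u in (0:ℝ)..s, F u) + ∫ u in s..t, F u = ∫ u in (0:ℝ)..t, F u :=
        intervalIntegral.integral_add_adjacent_intervals (hFiv 0 s le_rfl hs.1 hs.2)
          (hFiv s t hs.1 hst ht.2)
      have hadjn : (∫ u in (0:ℝ)..s, ‖F u‖) + ∫ u in s..t, ‖F u‖ = ∫ u in (0:ℝ)..t, ‖F u‖ :=
        intervalIntegral.integral_add_adjacent_intervals (hFniv 0 s le_rfl hs.1 hs.2)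
          (hFniv s t hs.1 hst ht.2)
      have hsplitx : x t - x s = (∫ u in s..t, F u) + (x0til t - x0til s) := by
        rw [hxt, hxs, ← hadj]; abel
      have hφdiff : φ t - φ s = (∫ u in s..t, ‖F u‖) + (φ₂ t - φ₂ s) := by
        simp only [hφ]; rw [← hadjn]; ring
      rw [hsplitx, hφdiff]
      refine le_trans (norm_add_le _ _) (add_le_add ?_ (hx0bnd s hs t ht hst))
      exact intervalIntegral.norm_integral_le_integral_norm hst
    refine ⟨⟨bv_of_bound hbd, ?_, hint, ?_⟩, hx00⟩
    · filter_upwards [hinit, ae_restrict_mem measurableSet_Ico] with t h1 h2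
      rwa [hx0til t, if_neg (not_lt.2 h2.2.le), sub_zero] at h1
    · intro t ht
      have := eq_add_of_sub_eq (heq t ⟨ht.1.le, ht.2⟩)
      rw [this, hx0til t, if_pos ht.1, hx00]


end
end
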